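/- If a nonnegative kernel Q from E to F satisfies sup_{x,y∈E} Q(1)(x)/Q(1)(y) ≤ κ for some κ ∈ [1,∞), where Q(1)(x) := Q(x,F) > 0, then for the normalized kernel P(x,dy) := Q(x,dy)/Q(1)(x) and any probability measures μ, ρ on E, the normalized updates μQ/μQ(1) and ρQ/ρQ(1) satisfy ‖μQ/μ(Q(1)) − ρQ/ρ(Q(1))‖_tv ≤ β(P) · (osc(Q(1))/(μ(Q(1)) ∧ ρ(Q(1)))) · ‖μ−ρ‖_tv, where β(P) is the Dobrushin coefficient of P and osc(f) = sup f + sup_{x,y}|f(x)−f(y)|. -/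

import Mathlib

open MeasureTheory ProbabilityTheory

/-- Total variation distance as the supremum over measurable sets. -/
noncomputable def tvDist {E : Type*} [MeasurableSpace E] (μ ρ : Measure E) : ℝ :=
  ⨆ A : {s : Set E // MeasurableSet s}, |(μ A).toReal - (ρ A).toReal|


section Helpers

variable {α : Type*} [MeasurableSpace α]

lemma tvDist_le_of (μ ρ : Measure α) (C : ℝ)
    (h : ∀ s : Set α, MeasurableSet s → |(μ s).toReal - (ρ s).toReal| ≤ C) :
    tvDist μ ρ ≤ C := by
  haveI : Nonempty {s : Set α // MeasurableSet s} := ⟨⟨∅, MeasurableSet.empty⟩⟩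
  exact ciSup_le fun A => h A.1 A.2

lemma bddAbove_tv (μ ρ : Measure α) [IsFiniteMeasure μ] [IsFiniteMeasure ρ] :
    BddAbove (Set.range fun A : {s : Set α // MeasurableSet s} =>
      |(μ A).toReal - (ρ A).toReal|) := by
  refine ⟨(μ Set.univ).toReal + (ρ Set.univ).toReal, ?_⟩
  rintro x ⟨A, rfl⟩
  have h1 : (μ A).toReal ≤ (μ Set.univ).toReal :=
    ENNReal.toReal_mono (measure_ne_top _ _) (measure_mono (Set.subset_univ _))
  have h2 : (ρ A).toReal ≤ (ρ Set.univ).toReal :=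
    ENNReal.toReal_mono (measure_ne_top _ _) (measure_mono (Set.subset_univ _))
  have := abs_sub (μ A.1).toReal (ρ A.1).toReal
  rw [abs_sub_le_iff]
  constructor <;> [skip; skip] <;>
    nlinarith [ENNReal.toReal_nonneg (a := μ A.1), ENNReal.toReal_nonneg (a := ρ A.1)]

lemma le_tvDist (μ ρ : Measure α) [IsFiniteMeasure μ] [IsFiniteMeasure ρ]
    {s : Set α} (hs : MeasurableSet s) :
    |(μ s).toReal - (ρ s).toReal| ≤ tvDist μ ρ :=
  le_ciSup (bddAbove_tv μ ρ) (⟨s, hs⟩ : {s : Set α // MeasurableSet s})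

lemma tvDist_nonneg (μ ρ : Measure α) [IsFiniteMeasure μ] [IsFiniteMeasure ρ] :
    0 ≤ tvDist μ ρ :=
  (abs_nonneg _).trans (le_tvDist μ ρ MeasurableSet.empty)

lemma tvDist_comm (μ ρ : Measure α) : tvDist μ ρ = tvDist ρ μ := by
  unfold tvDist
  congr 1; funext A; exact abs_sub_comm _ _

lemma integrable_of_bdd (μ : Measure α) [IsFiniteMeasure μ] {φ : α → ℝ}
    (hm : Measurable φ) {C : ℝ} (h : ∀ x, |φ x| ≤ C) : Integrable φ μ :=
  ⟨hm.aestronglyMeasurable,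
    HasFiniteIntegral.of_bounded (C := C) (Filter.Eventually.of_forall fun x => by
      simpa using h x)⟩

lemma integral_sub_le_osc_mul_tv [Nonempty α] (μ ρ : Measure α)
    [IsProbabilityMeasure μ] [IsProbabilityMeasure ρ] (φ : α → ℝ)
    (hm : Measurable φ) (C : ℝ) (hb : ∀ x, |φ x| ≤ C) (M : ℝ) (hM : 0 ≤ M)
    (hosc : ∀ x y, φ x - φ y ≤ M) :
    ∫ x, φ x ∂μ - ∫ x, φ x ∂ρ ≤ M * tvDist μ ρ := by
  obtain ⟨s, hs, hle₁, hle₂⟩ := hahn_decomposition (μ := μ) (ν := ρ)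
  have hrle : ρ.restrict s ≤ μ.restrict s := by
    refine Measure.le_iff.2 fun t ht => ?_
    rw [Measure.restrict_apply ht, Measure.restrict_apply ht]
    exact hle₁ _ (ht.inter hs) Set.inter_subset_right
  have hrle' : μ.restrict sᶜ ≤ ρ.restrict sᶜ := by
    refine Measure.le_iff.2 fun t ht => ?_
    rw [Measure.restrict_apply ht, Measure.restrict_apply ht]
    exact hle₂ _ (ht.inter hs.compl) Set.inter_subset_right
  set ν₁ : Measure α := μ.restrict s - ρ.restrict s with hν₁def
  set ν₂ : Measure α := ρ.restrict sᶜ - μ.restrict sᶜ with hν₂def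
  have hν₁ : ν₁ + ρ.restrict s = μ.restrict s := Measure.sub_add_cancel_of_le hrle
  have hν₂ : ν₂ + μ.restrict sᶜ = ρ.restrict sᶜ := Measure.sub_add_cancel_of_le hrle'
  haveI : IsFiniteMeasure ν₁ := isFiniteMeasure_of_le (μ.restrict s) Measure.sub_le
  haveI : IsFiniteMeasure ν₂ := isFiniteMeasure_of_le (ρ.restrict sᶜ) Measure.sub_le
  -- masses
  have hmass₁ : (ν₁ Set.univ).toReal = (μ s).toReal - (ρ s).toReal := by
    rw [hν₁def, Measure.sub_apply MeasurableSet.univ hrle]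
    simp only [Measure.restrict_apply_univ]
    exact ENNReal.toReal_sub_of_le (hle₁ s hs subset_rfl) (measure_ne_top _ _)
  have hmass₂ : (ν₂ Set.univ).toReal = (ρ sᶜ).toReal - (μ sᶜ).toReal := by
    rw [hν₂def, Measure.sub_apply MeasurableSet.univ hrle']
    simp only [Measure.restrict_apply_univ]
    exact ENNReal.toReal_sub_of_le (hle₂ sᶜ hs.compl subset_rfl) (measure_ne_top _ _)
  have hμs : (μ s).toReal + (μ sᶜ).toReal = 1 := by
    rw [← ENNReal.toReal_add (measure_ne_top _ _) (measure_ne_top _ _),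
      prob_add_prob_compl hs]
    simp
  have hρs : (ρ s).toReal + (ρ sᶜ).toReal = 1 := by
    rw [← ENNReal.toReal_add (measure_ne_top _ _) (measure_ne_top _ _),
      prob_add_prob_compl hs]
    simp
  have hteq : (ν₂ Set.univ).toReal = (ν₁ Set.univ).toReal := by
    rw [hmass₂, hmass₁]; linarith
  have ht0 : 0 ≤ (ν₁ Set.univ).toReal := ENNReal.toReal_nonneg
  have httv : (ν₁ Set.univ).toReal ≤ tvDist μ ρ := by
    rw [hmass₁]
    exact (le_abs_self _).trans (le_tvDist μ ρ hs)
  -- integrability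
  have hintμ : Integrable φ μ := integrable_of_bdd μ hm hb
  have hintρ : Integrable φ ρ := integrable_of_bdd ρ hm hb
  have hint₁ : Integrable φ ν₁ := integrable_of_bdd ν₁ hm hb
  have hint₂ : Integrable φ ν₂ := integrable_of_bdd ν₂ hm hb
  have hintrs : Integrable φ (ρ.restrict s) := integrable_of_bdd _ hm hb
  have hintmsc : Integrable φ (μ.restrict sᶜ) := integrable_of_bdd _ hm hb
  -- decomposition of integrals
  have hIμ : ∫ x, φ x ∂μ = ∫ x, φ x ∂ν₁ + ∫ x, φ x ∂(ρ.restrict s)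
      + ∫ x, φ x ∂(μ.restrict sᶜ) := by
    rw [← integral_add_compl hs hintμ]
    have : (∫ x in s, φ x ∂μ) = ∫ x, φ x ∂(ν₁ + ρ.restrict s) := by rw [hν₁]
    rw [this, integral_add_measure hint₁ hintrs]
  have hIρ : ∫ x, φ x ∂ρ = ∫ x, φ x ∂(ρ.restrict s) + ∫ x, φ x ∂ν₂
      + ∫ x, φ x ∂(μ.restrict sᶜ) := by
    rw [← integral_add_compl hs hintρ]
    have : (∫ x in sᶜ, φ x ∂ρ) = ∫ x, φ x ∂(ν₂ + μ.restrict sᶜ) := by rw [hν₂]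
    rw [this, integral_add_measure hint₂ hintmsc]
    ring
  have hdiff : ∫ x, φ x ∂μ - ∫ x, φ x ∂ρ = ∫ x, φ x ∂ν₁ - ∫ x, φ x ∂ν₂ := by
    rw [hIμ, hIρ]; ring
  -- sup/inf bounds
  set b := sSup (Set.range φ) with hbdef
  set a := sInf (Set.range φ) with hadef
  have hrne : (Set.range φ).Nonempty := Set.range_nonempty _
  have hbddA : BddAbove (Set.range φ) := ⟨C, by rintro x ⟨y, rfl⟩; exact (le_abs_self _).trans (hb y)⟩
  have hbddB : BddBelow (Set.range φ) := ⟨-C, by rintro x ⟨y, rfl⟩; exact neg_le_of_abs_le (hb y)⟩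
  have hφb : ∀ x, φ x ≤ b := fun x => le_csSup hbddA ⟨x, rfl⟩
  have hφa : ∀ x, a ≤ φ x := fun x => csInf_le hbddB ⟨x, rfl⟩
  have hba : b - a ≤ M := by
    have hb' : b ≤ a + M := by
      refine csSup_le hrne ?_
      rintro x ⟨y, rfl⟩
      have : φ y - M ≤ a := by
        refine le_csInf hrne ?_
        rintro x ⟨z, rfl⟩
        linarith [hosc y z]
      linarith
    linarith
  have hI₁ : ∫ x, φ x ∂ν₁ ≤ b * (ν₁ Set.univ).toReal := by
    have := integral_mono hint₁ (integrable_const b) hφb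
    rwa [integral_const, smul_eq_mul, mul_comm] at this
  have hI₂ : a * (ν₁ Set.univ).toReal ≤ ∫ x, φ x ∂ν₂ := by
    have := integral_mono (integrable_const a) hint₂ hφa
    rwa [integral_const, smul_eq_mul, measureReal_def, hteq, mul_comm] at this
  rw [hdiff]
  nlinarith [mul_le_mul_of_nonneg_left httv hM]

lemma abs_integral_sub_le_osc_mul_tv [Nonempty α] (μ ρ : Measure α)
    [IsProbabilityMeasure μ] [IsProbabilityMeasure ρ] (φ : α → ℝ)
    (hm : Measurable φ) (C : ℝ) (hb : ∀ x, |φ x| ≤ C) (M : ℝ) (hM : 0 ≤ M)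
    (hosc : ∀ x y, φ x - φ y ≤ M) :
    |∫ x, φ x ∂μ - ∫ x, φ x ∂ρ| ≤ M * tvDist μ ρ := by
  rw [abs_le]
  constructor
  · have := integral_sub_le_osc_mul_tv ρ μ φ hm C hb M hM hosc
    rw [tvDist_comm ρ μ] at this
    linarith
  · exact integral_sub_le_osc_mul_tv μ ρ φ hm C hb M hM hosc

end Helpers

/-- Dobrushin-type stability of the normalized update `μ ↦ μQ/μ(Q(1))` of a nonnegative
kernel `Q` with bounded mass ratio: letting `P(x,·) = Q(x,·)/Q(1)(x)`,
`‖μQ/μ(Q(1)) − ρQ/ρ(Q(1))‖_tv ≤ β(P)·(osc(Q(1))/(μ(Q(1)) ∧ ρ(Q(1))))·‖μ−ρ‖_tv`. -/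
theorem normalized_update_tv_bound
    {E F : Type*} [MeasurableSpace E] [MeasurableSpace F] [Nonempty E]
    (Q : Kernel E F) [IsFiniteKernel Q]
    (hQpos : ∀ x, 0 < Q x Set.univ)
    (κ : ℝ) (hκ : 1 ≤ κ)
    (hratio : ∀ x y : E, (Q x Set.univ).toReal ≤ κ * (Q y Set.univ).toReal)
    (μ ρ : Measure E) [IsProbabilityMeasure μ] [IsProbabilityMeasure ρ] :
    tvDist ((∫⁻ x, Q x Set.univ ∂μ)⁻¹ • μ.bind (fun x => Q x))
        ((∫⁻ x, Q x Set.univ ∂ρ)⁻¹ • ρ.bind (fun x => Q x)) ≤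
      (⨆ p : E × E, tvDist ((Q p.1 Set.univ)⁻¹ • Q p.1) ((Q p.2 Set.univ)⁻¹ • Q p.2)) *
        (((⨆ x, |(Q x Set.univ).toReal|) +
            ⨆ p : E × E, |(Q p.1 Set.univ).toReal - (Q p.2 Set.univ).toReal|) /
          min (∫ x, (Q x Set.univ).toReal ∂μ) (∫ x, (Q x Set.univ).toReal ∂ρ)) *
        tvDist μ ρ := by
  classical
  obtain ⟨x₀⟩ := ‹Nonempty E›
  -- basic facts about f x := (Q x univ).toReal
  have hQtop : ∀ (x : E) (A : Set F), Q x A ≠ ⊤ := fun x A =>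
    ((Q.measure_le_bound x A).trans_lt (Q.bound_lt_top)).ne
  have hfm : Measurable fun x => (Q x Set.univ).toReal :=
    (Q.measurable_coe MeasurableSet.univ).ennreal_toReal
  have hf0 : ∀ x, 0 < (Q x Set.univ).toReal := fun x =>
    ENNReal.toReal_pos (hQpos x).ne' (hQtop x _)
  have hfB : ∀ x, (Q x Set.univ).toReal ≤ Q.bound.toReal := fun x =>
    ENNReal.toReal_mono (Q.bound_lt_top).ne (Q.measure_le_bound x _)
  set B := Q.bound.toReal with hBdef
  have hB0 : 0 ≤ B := ENNReal.toReal_nonneg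
  have hIfμ : Integrable (fun x => (Q x Set.univ).toReal) μ :=
    integrable_of_bdd μ hfm (C := B) fun x => by
      rw [abs_of_nonneg (hf0 x).le]; exact hfB x
  have hIfρ : Integrable (fun x => (Q x Set.univ).toReal) ρ :=
    integrable_of_bdd ρ hfm (C := B) fun x => by
      rw [abs_of_nonneg (hf0 x).le]; exact hfB x
  have hκ0 : (0:ℝ) < κ := lt_of_lt_of_le one_pos hκ
  have hlow : ∀ x, (Q x₀ Set.univ).toReal / κ ≤ (Q x Set.univ).toReal := fun x =>
    (div_le_iff₀ hκ0).2 (by linarith [hratio x₀ x])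
  have hintpos : ∀ (ν : Measure E) [IsProbabilityMeasure ν],
      Integrable (fun x => (Q x Set.univ).toReal) ν →
      0 < ∫ x, (Q x Set.univ).toReal ∂ν := by
    intro ν _ hint
    have h1 : ∫ (_ : E), (Q x₀ Set.univ).toReal / κ ∂ν = (Q x₀ Set.univ).toReal / κ := by
      simp
    have h2 := integral_mono (integrable_const ((Q x₀ Set.univ).toReal / κ)) hint hlow
    rw [h1] at h2
    exact lt_of_lt_of_le (div_pos (hf0 x₀) hκ0) h2
  have hIμpos := hintpos μ hIfμ
  have hIρpos := hintpos ρ hIfρ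
  -- lintegral facts
  have hLrel : ∀ (ν : Measure E) [IsProbabilityMeasure ν],
      (∫⁻ x, Q x Set.univ ∂ν).toReal = ∫ x, (Q x Set.univ).toReal ∂ν := by
    intro ν _
    exact (integral_toReal ((Q.measurable_coe MeasurableSet.univ).aemeasurable)
      (Filter.Eventually.of_forall fun x => (hQtop x _).lt_top)).symm
  -- value of the normalized measures on a measurable set
  have happ : ∀ (ν : Measure E) [IsProbabilityMeasure ν], ∀ {A : Set F}, MeasurableSet A →
      (((∫⁻ x, Q x Set.univ ∂ν)⁻¹ • ν.bind (fun x => Q x)) A).toReal =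
        (∫ x, (Q x A).toReal ∂ν) / ∫ x, (Q x Set.univ).toReal ∂ν := by
    intro ν _ A hA
    rw [Measure.smul_apply, smul_eq_mul, Measure.bind_apply hA Q.measurable.aemeasurable,
      ENNReal.toReal_mul, ENNReal.toReal_inv, hLrel ν,
      integral_toReal ((Q.measurable_coe hA).aemeasurable)
        (Filter.Eventually.of_forall fun x => (hQtop x _).lt_top),
      inv_mul_eq_div]
  -- probability of normalized kernels
  have hPprob : ∀ x, IsProbabilityMeasure ((Q x Set.univ)⁻¹ • Q x) := fun x =>
    ⟨by rw [Measure.smul_apply, smul_eq_mul]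
        exact ENNReal.inv_mul_cancel (hQpos x).ne' (hQtop x _)⟩
  have hPA : ∀ (x : E) (A : Set F), (((Q x Set.univ)⁻¹ • Q x) A).toReal =
      (Q x A).toReal / (Q x Set.univ).toReal := fun x A => by
    rw [Measure.smul_apply, smul_eq_mul, ENNReal.toReal_mul, ENNReal.toReal_inv,
      inv_mul_eq_div]
  have hprob_toReal : ∀ (ν : Measure F) [IsProbabilityMeasure ν] (s : Set F),
      (ν s).toReal ≤ 1 := fun ν _ s => by
    simpa using ENNReal.toReal_mono ENNReal.one_ne_top prob_le_one
  -- suprema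
  set β := ⨆ p : E × E, tvDist ((Q p.1 Set.univ)⁻¹ • Q p.1) ((Q p.2 Set.univ)⁻¹ • Q p.2)
    with hβdef
  have hβbdd : BddAbove (Set.range fun p : E × E =>
      tvDist ((Q p.1 Set.univ)⁻¹ • Q p.1) ((Q p.2 Set.univ)⁻¹ • Q p.2)) := by
    refine ⟨2, ?_⟩
    rintro r ⟨p, rfl⟩
    haveI := hPprob p.1; haveI := hPprob p.2
    refine tvDist_le_of _ _ 2 fun s _ => ?_
    have h1 := hprob_toReal ((Q p.1 Set.univ)⁻¹ • Q p.1) s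
    have h2 := hprob_toReal ((Q p.2 Set.univ)⁻¹ • Q p.2) s
    rw [abs_sub_le_iff]
    constructor <;> nlinarith [ENNReal.toReal_nonneg (a := ((Q p.1 Set.univ)⁻¹ • Q p.1) s),
      ENNReal.toReal_nonneg (a := ((Q p.2 Set.univ)⁻¹ • Q p.2) s)]
  have hβle : ∀ x y : E, tvDist ((Q x Set.univ)⁻¹ • Q x) ((Q y Set.univ)⁻¹ • Q y) ≤ β :=
    fun x y => le_ciSup hβbdd (x, y)
  have hβ0 : 0 ≤ β := by
    haveI := hPprob x₀
    exact (tvDist_nonneg _ _).trans (hβle x₀ x₀)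
  set S₁ := ⨆ x, |(Q x Set.univ).toReal| with hS₁def
  have hS₁bdd : BddAbove (Set.range fun x => |(Q x Set.univ).toReal|) := by
    refine ⟨B, ?_⟩; rintro r ⟨x, rfl⟩
    show |(Q x Set.univ).toReal| ≤ B
    rw [abs_of_nonneg (hf0 x).le]; exact hfB x
  have hS₁x : ∀ x, (Q x Set.univ).toReal ≤ S₁ := fun x =>
    (le_abs_self _).trans (le_ciSup hS₁bdd x)
  have hS₁0 : 0 ≤ S₁ := (abs_nonneg _).trans (le_ciSup hS₁bdd x₀)
  set S₂ := ⨆ p : E × E, |(Q p.1 Set.univ).toReal - (Q p.2 Set.univ).toReal| with hS₂def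
  have hS₂bdd : BddAbove (Set.range fun p : E × E =>
      |(Q p.1 Set.univ).toReal - (Q p.2 Set.univ).toReal|) := by
    refine ⟨2 * B, ?_⟩; rintro r ⟨p, rfl⟩
    show |(Q p.1 Set.univ).toReal - (Q p.2 Set.univ).toReal| ≤ 2 * B
    rw [abs_sub_le_iff]
    constructor <;> nlinarith [hfB p.1, hfB p.2, (hf0 p.1).le, (hf0 p.2).le]
  have hS₂xy : ∀ x y : E, |(Q x Set.univ).toReal - (Q y Set.univ).toReal| ≤ S₂ :=
    fun x y => le_ciSup hS₂bdd (x, y)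
  have hS₂0 : 0 ≤ S₂ := (abs_nonneg _).trans (le_ciSup hS₂bdd (x₀, x₀))
  have hS0 : 0 ≤ S₁ + S₂ := add_nonneg hS₁0 hS₂0
  have hminpos : 0 < min (∫ x, (Q x Set.univ).toReal ∂μ) (∫ x, (Q x Set.univ).toReal ∂ρ) :=
    lt_min hIμpos hIρpos
  -- main bound, set by set
  refine tvDist_le_of _ _ _ fun A hA => ?_
  rw [happ μ hA, happ ρ hA]
  have hGm : Measurable fun x => (Q x A).toReal := (Q.measurable_coe hA).ennreal_toReal
  have hGf : ∀ x, (Q x A).toReal ≤ (Q x Set.univ).toReal := fun x =>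
    ENNReal.toReal_mono (hQtop x _) (measure_mono (Set.subset_univ _))
  have hG0 : ∀ x, 0 ≤ (Q x A).toReal := fun x => ENNReal.toReal_nonneg
  have hIGμ : Integrable (fun x => (Q x A).toReal) μ :=
    integrable_of_bdd μ hGm (C := B) fun x => by
      rw [abs_of_nonneg (hG0 x)]; exact (hGf x).trans (hfB x)
  have hIGρ : Integrable (fun x => (Q x A).toReal) ρ :=
    integrable_of_bdd ρ hGm (C := B) fun x => by
      rw [abs_of_nonneg (hG0 x)]; exact (hGf x).trans (hfB x)
  set g : E → ℝ := fun x => (Q x A).toReal / (Q x Set.univ).toReal with hgdef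
  have hfg : ∀ x, (Q x Set.univ).toReal * g x = (Q x A).toReal := fun x => by
    show (Q x Set.univ).toReal * ((Q x A).toReal / (Q x Set.univ).toReal) = (Q x A).toReal
    rw [mul_comm, div_mul_cancel₀ _ (hf0 x).ne']
  have hg0 : ∀ x, 0 ≤ g x := fun x => div_nonneg (hG0 x) (hf0 x).le
  have hg1 : ∀ x, g x ≤ 1 := fun x => (div_le_one (hf0 x)).2 (hGf x)
  have hgβ : ∀ x y, |g x - g y| ≤ β := by
    intro x y
    haveI := hPprob x; haveI := hPprob y
    have := (le_tvDist ((Q x Set.univ)⁻¹ • Q x) ((Q y Set.univ)⁻¹ • Q y) hA).trans (hβle x y)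
    rwa [hPA x A, hPA y A] at this
  set c := (∫ x, (Q x A).toReal ∂ρ) / ∫ x, (Q x Set.univ).toReal ∂ρ with hcdef
  have hgc : ∀ y, |g y - c| ≤ β := by
    intro y
    have key : |g y * ∫ x, (Q x Set.univ).toReal ∂ρ - ∫ x, (Q x A).toReal ∂ρ| ≤
        β * ∫ x, (Q x Set.univ).toReal ∂ρ := by
      have h1 : g y * ∫ x, (Q x Set.univ).toReal ∂ρ - ∫ x, (Q x A).toReal ∂ρ =
          ∫ x, (g y * (Q x Set.univ).toReal - (Q x A).toReal) ∂ρ := by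
        rw [integral_sub (hIfρ.const_mul _) hIGρ, integral_const_mul]
      rw [h1]
      have hptw : ∀ x, |g y * (Q x Set.univ).toReal - (Q x A).toReal| ≤
          β * (Q x Set.univ).toReal := by
        intro x
        have e : g y * (Q x Set.univ).toReal - (Q x A).toReal =
            (Q x Set.univ).toReal * (g y - g x) := by
          rw [← hfg x]; ring
        rw [e, abs_mul, abs_of_nonneg (hf0 x).le, abs_sub_comm]
        exact mul_le_mul_of_nonneg_left (hgβ x y) (hf0 x).le |>.trans
          (le_of_eq (mul_comm _ _))
      calc |∫ x, (g y * (Q x Set.univ).toReal - (Q x A).toReal) ∂ρ|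
          ≤ ∫ x, |g y * (Q x Set.univ).toReal - (Q x A).toReal| ∂ρ := by
            simpa [Real.norm_eq_abs] using
              norm_integral_le_integral_norm
                (fun x => g y * (Q x Set.univ).toReal - (Q x A).toReal) (μ := ρ)
        _ ≤ ∫ x, β * (Q x Set.univ).toReal ∂ρ :=
            integral_mono ((hIfρ.const_mul _).sub hIGρ).abs (hIfρ.const_mul β)
              fun x => hptw x
        _ = β * ∫ x, (Q x Set.univ).toReal ∂ρ := integral_const_mul _ _
    have h2 : (g y - c) * ∫ x, (Q x Set.univ).toReal ∂ρ =
        g y * ∫ x, (Q x Set.univ).toReal ∂ρ - ∫ x, (Q x A).toReal ∂ρ := by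
      rw [hcdef]; field_simp
    have h3 : |g y - c| * ∫ x, (Q x Set.univ).toReal ∂ρ ≤
        β * ∫ x, (Q x Set.univ).toReal ∂ρ := by
      rw [← abs_of_pos hIρpos, ← abs_mul, h2, abs_of_pos hIρpos]
      exact key
    exact le_of_mul_le_mul_right h3 hIρpos
  set φ : E → ℝ := fun x => (Q x A).toReal - c * (Q x Set.univ).toReal with hφdef
  have hφm : Measurable φ := hGm.sub (hfm.const_mul c)
  have hφb : ∀ x, |φ x| ≤ B + |c| * B := by
    intro x
    rw [hφdef]
    calc |(Q x A).toReal - c * (Q x Set.univ).toReal|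
        ≤ |(Q x A).toReal| + |c * (Q x Set.univ).toReal| := abs_sub _ _
      _ ≤ B + |c| * B := by
          rw [abs_mul, abs_of_nonneg (hG0 x), abs_of_nonneg (hf0 x).le]
          have := (hGf x).trans (hfB x)
          have := hfB x
          nlinarith [abs_nonneg c]
  have hosc : ∀ x y, φ x - φ y ≤ β * (S₁ + S₂) := by
    intro x y
    have e : φ x - φ y = (Q x Set.univ).toReal * (g x - g y) +
        (g y - c) * ((Q x Set.univ).toReal - (Q y Set.univ).toReal) := by
      have h1 := hfg x; have h2 := hfg y
      rw [hφdef]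
      linear_combination h2 - h1
    have t1 : (Q x Set.univ).toReal * (g x - g y) ≤ S₁ * β := by
      have b1 : (Q x Set.univ).toReal * (g x - g y) ≤ (Q x Set.univ).toReal * β :=
        mul_le_mul_of_nonneg_left ((le_abs_self _).trans (hgβ x y)) (hf0 x).le
      exact b1.trans (mul_le_mul_of_nonneg_right (hS₁x x) hβ0)
    have t2 : (g y - c) * ((Q x Set.univ).toReal - (Q y Set.univ).toReal) ≤ β * S₂ := by
      calc (g y - c) * ((Q x Set.univ).toReal - (Q y Set.univ).toReal)
          ≤ |(g y - c) * ((Q x Set.univ).toReal - (Q y Set.univ).toReal)| := le_abs_self _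
        _ = |g y - c| * |(Q x Set.univ).toReal - (Q y Set.univ).toReal| := abs_mul _ _
        _ ≤ β * S₂ := mul_le_mul (hgc y) (hS₂xy x y) (abs_nonneg _) hβ0
    rw [e]; linarith
  have habs := abs_integral_sub_le_osc_mul_tv μ ρ φ hφm (B + |c| * B) hφb
    (β * (S₁ + S₂)) (mul_nonneg hβ0 hS0) hosc
  have hφρ : ∫ x, φ x ∂ρ = 0 := by
    rw [hφdef]
    rw [integral_sub hIGρ (hIfρ.const_mul c), integral_const_mul, hcdef]
    field_simp
    ring
  have hφμ : ∫ x, φ x ∂μ = (∫ x, (Q x A).toReal ∂μ) - c * ∫ x, (Q x Set.univ).toReal ∂μ := by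
    rw [hφdef, integral_sub hIGμ (hIfμ.const_mul c), integral_const_mul]
  have hkey : (∫ x, (Q x A).toReal ∂μ) / (∫ x, (Q x Set.univ).toReal ∂μ) -
      (∫ x, (Q x A).toReal ∂ρ) / (∫ x, (Q x Set.univ).toReal ∂ρ) =
      (∫ x, φ x ∂μ - ∫ x, φ x ∂ρ) / ∫ x, (Q x Set.univ).toReal ∂μ := by
    rw [hφρ, hφμ, ← hcdef]
    field_simp
    ring
  rw [hkey, abs_div, abs_of_pos hIμpos]
  calc |∫ x, φ x ∂μ - ∫ x, φ x ∂ρ| / ∫ x, (Q x Set.univ).toReal ∂μ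
      ≤ (β * (S₁ + S₂) * tvDist μ ρ) / ∫ x, (Q x Set.univ).toReal ∂μ :=
        (div_le_div_iff_of_pos_right hIμpos).2 habs
    _ ≤ (β * (S₁ + S₂) * tvDist μ ρ) /
        min (∫ x, (Q x Set.univ).toReal ∂μ) (∫ x, (Q x Set.univ).toReal ∂ρ) :=
        div_le_div_of_nonneg_left
          (mul_nonneg (mul_nonneg hβ0 hS0) (tvDist_nonneg μ ρ)) hminpos (min_le_left _ _)
    _ = β * ((S₁ + S₂) /
        min (∫ x, (Q x Set.univ).toReal ∂μ) (∫ x, (Q x Set.univ).toReal ∂ρ)) * tvDist μ ρ := by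
        rw [div_eq_mul_inv, div_eq_mul_inv]; ring
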